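/- Let H be any positive edge-weighting of the undirected 5-cycle construction (cycles C_1,...,C_m with the described cross-cycle edges). Suppose that for every i and every vertex v_i^k (with cross-cycle neighbor v_{i+1}^j), the 3-edge path (cross-cycle edge, then two edges of C_{i+1} from v_{i+1}^j to v_{i+1}^{j+2 mod 5}) is strictly shorter under H than the 2-edge path (edge of C_i from v_i^k to v_i^{k+1 mod 5}, then the cross-cycle edge from v_i^{k+1 mod 5} to v_{i+1}^{j+2 mod 5}). Then for every i, w_H(C_i) > 2·w_H(C_{i+1}), where w_H(C) denotes the sum of the H-weights of the edges of the 5-cycle C. -/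

import Mathlib

/-- The weight of a path (list of vertices): sum of weights of consecutive edges. -/
def pathWeight {V : Type} (w : V → V → ℝ) : List V → ℝ
  | [] => 0
  | [_] => 0
  | a :: b :: rest => w a b + pathWeight w (b :: rest)

/-- A nonempty list of vertices is a path if consecutive vertices are joined by edges. -/
def IsPath {V : Type} (E : V → V → Prop) : List V → Prop
  | [] => False
  | [_] => True
  | a :: b :: rest => E a b ∧ IsPath E (b :: rest)

/-- `p` is a shortest path: it is a path, and no path with the same endpoints is shorter. -/
def IsShortestPath {V : Type} (E : V → V → Prop) (w : V → V → ℝ) (p : List V) : Prop :=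
  IsPath E p ∧ ∀ q : List V, IsPath E q → q.head? = p.head? → q.getLast? = p.getLast? →
    pathWeight w p ≤ pathWeight w q

/-- Cross-edge pattern of the undirected construction: the cross edge from
v_i^k goes to v_{i+1}^{2k} (superscripts mod 5). -/
def cross5 (k : Fin 5) : Fin 5 := 2 * k

/-- Edges (symmetric) of the undirected lower-bound construction: the 5-cycle
edges of C_i (1 ≤ i ≤ m) and the cross-cycle edges v_i^k — v_{i+1}^{2k}. -/
def undirE (m : ℕ) (u v : ℕ × Fin 5) : Prop :=
  (u.1 = v.1 ∧ 1 ≤ u.1 ∧ u.1 ≤ m ∧ (v.2 = u.2 + 1 ∨ u.2 = v.2 + 1)) ∨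
  (v.1 = u.1 + 1 ∧ 1 ≤ u.1 ∧ u.1 + 1 ≤ m ∧ v.2 = cross5 u.2) ∨
  (u.1 = v.1 + 1 ∧ 1 ≤ v.1 ∧ v.1 + 1 ≤ m ∧ u.2 = cross5 v.2)

/-- if under a positive symmetric weighting H each canonical
3-edge path is strictly shorter than the competing 2-edge path (cycle edge of
C_i then cross edge), then w_H(C_i) > 2 w_H(C_{i+1}). -/
theorem stmt10 (m : ℕ) (H : ℕ × Fin 5 → ℕ × Fin 5 → ℝ)
    (hsymm : ∀ u v, H u v = H v u)
    (hpos : ∀ u v, 0 < H u v)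
    (hineq : ∀ i : ℕ, 1 ≤ i → i + 1 ≤ m → ∀ k : Fin 5,
      H (i, k) (i + 1, cross5 k) + H (i + 1, cross5 k) (i + 1, cross5 k + 1)
          + H (i + 1, cross5 k + 1) (i + 1, cross5 k + 2)
        < H (i, k) (i, k + 1) + H (i, k + 1) (i + 1, cross5 k + 2)) :
    ∀ i : ℕ, 1 ≤ i → i + 1 ≤ m →
      (∑ k : Fin 5, H (i, k) (i, k + 1))
        > 2 * ∑ k : Fin 5, H (i + 1, k) (i + 1, k + 1) := by
  intro i h1 h2
  have h0 := hineq i h1 h2 0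
  have h1' := hineq i h1 h2 1
  have h2' := hineq i h1 h2 2
  have h3' := hineq i h1 h2 3
  have h4' := hineq i h1 h2 4
  simp only [cross5] at h0 h1' h2' h3' h4'
  norm_num at h0 h1' h2' h3' h4'
  rw [Fin.sum_univ_five, Fin.sum_univ_five]
  simp only [show (5:Fin 5)=0 from rfl, show (6:Fin 5)=1 from rfl, show (7:Fin 5)=2 from rfl,
    show (8:Fin 5)=3 from rfl, show (9:Fin 5)=4 from rfl, show (10:Fin 5)=0 from rfl,
    show (0:Fin 5)+1=1 from rfl, show (1:Fin 5)+1=2 from rfl, show (2:Fin 5)+1=3 from rfl,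
    show (3:Fin 5)+1=4 from rfl, show (4:Fin 5)+1=0 from rfl,
    show (2:Fin 5)+2=4 from rfl, show (2:Fin 5)*2=4 from rfl, show (2:Fin 5)*3=1 from rfl,
    show (2:Fin 5)*4=3 from rfl, show (4:Fin 5)+2=1 from rfl, show (1:Fin 5)+2=3 from rfl,
    show (3:Fin 5)+2=0 from rfl]
    at h0 h1' h2' h3' h4' ⊢
  linarith
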